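/- arXiv:1710.08681 — 3 statements merged into one kernel-verified Lean document; each statement's English description precedes it below -/
import Mathlib

section
/- Let Λ : L(H) → L(K) be a channel between finite-dimensional complex Hilbert spaces. There is a unique orthogonal projection R ∈ L(K) (the support projection of Λ) such that Λ*(R) = 1_H and such that every orthogonal projection Q ≤ R with Λ*(Q) = 1_H equals R. Moreover: (i) Λ*(B) = Λ*(RB) = Λ*(BR) = Λ*(RBR) for all B ∈ L(K); (ii) if E ∈ L(K) is positive semidefinite and Λ*(E) = 0, then RER = 0; (iii) if E ∈ L(K) is an effect (0 ≤ E ≤ 1_K) and Λ*(E) is an orthogonal projection, then RER is an orthogonal projection and RE = ER. -/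
open scoped ComplexOrder

noncomputable section

/-- A positive semidefinite operator on a finite-dimensional complex Hilbert space. -/
def IsPosOp {E : Type*} [NormedAddCommGroup E] [InnerProductSpace ℂ E]
    [FiniteDimensional ℂ E] (T : E →ₗ[ℂ] E) : Prop :=
  LinearMap.adjoint T = T ∧ ∀ x : E, 0 ≤ (inner ℂ (T x) x : ℂ)

/-- An orthogonal projection: a self-adjoint idempotent operator. -/
def IsOrthoProj {E : Type*} [NormedAddCommGroup E] [InnerProductSpace ℂ E]
    [FiniteDimensional ℂ E] (P : E →ₗ[ℂ] E) : Prop :=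
  LinearMap.adjoint P = P ∧ P ∘ₗ P = P

/-- A discrete observable (POVM) with finite outcome set `Ω`. -/
def IsPOVM {E : Type*} [NormedAddCommGroup E] [InnerProductSpace ℂ E]
    [FiniteDimensional ℂ E] {Ω : Type*} [Fintype Ω] (A : Ω → E →ₗ[ℂ] E) : Prop :=
  (∀ j, IsPosOp (A j)) ∧ ∑ j, A j = (1 : E →ₗ[ℂ] E)

/-- A projection-valued measure (PVM). -/
def IsPVM {E : Type*} [NormedAddCommGroup E] [InnerProductSpace ℂ E]
    [FiniteDimensional ℂ E] {Ω : Type*} [Fintype Ω] (P : Ω → E →ₗ[ℂ] E) : Prop :=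
  (∀ j, IsOrthoProj (P j)) ∧ ∑ j, P j = (1 : E →ₗ[ℂ] E)

/-- An isometry between inner product spaces: `J* J = 1`. -/
def IsIsometryOp {E F : Type*} [NormedAddCommGroup E] [InnerProductSpace ℂ E]
    [FiniteDimensional ℂ E] [NormedAddCommGroup F] [InnerProductSpace ℂ F]
    [FiniteDimensional ℂ F] (J : E →ₗ[ℂ] F) : Prop :=
  LinearMap.adjoint J ∘ₗ J = (1 : E →ₗ[ℂ] E)

/-- `(F, P, J)` is a Naimark dilation of the observable `A`. -/
def IsNaimark {E F : Type*} [NormedAddCommGroup E] [InnerProductSpace ℂ E]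
    [FiniteDimensional ℂ E] [NormedAddCommGroup F] [InnerProductSpace ℂ F]
    [FiniteDimensional ℂ F] {Ω : Type*} [Fintype Ω]
    (A : Ω → E →ₗ[ℂ] E) (P : Ω → F →ₗ[ℂ] F) (J : E →ₗ[ℂ] F) : Prop :=
  IsPVM P ∧ IsIsometryOp J ∧ ∀ j, A j = LinearMap.adjoint J ∘ₗ P j ∘ₗ J

/-- A minimal Naimark dilation: the vectors `P j (J φ)` span the dilation space. -/
def IsMinimalNaimark {E F : Type*} [NormedAddCommGroup E] [InnerProductSpace ℂ E]
    [FiniteDimensional ℂ E] [NormedAddCommGroup F] [InnerProductSpace ℂ F]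
    [FiniteDimensional ℂ F] {Ω : Type*} [Fintype Ω]
    (A : Ω → E →ₗ[ℂ] E) (P : Ω → F →ₗ[ℂ] F) (J : E →ₗ[ℂ] F) : Prop :=
  IsNaimark A P J ∧ Submodule.span ℂ {x : F | ∃ j φ, x = P j (J φ)} = ⊤

/-- The sandwich map `σ ↦ U ∘ σ ∘ V` as a linear map on operators. -/
def sandwich {E F : Type*} [NormedAddCommGroup E] [InnerProductSpace ℂ E]
    [NormedAddCommGroup F] [InnerProductSpace ℂ F]
    (U : E →ₗ[ℂ] F) (V : F →ₗ[ℂ] E) : (E →ₗ[ℂ] E) →ₗ[ℂ] (F →ₗ[ℂ] F) where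
  toFun σ := U ∘ₗ σ ∘ₗ V
  map_add' σ τ := by
    ext x; simp [LinearMap.add_comp, LinearMap.comp_add]
  map_smul' c σ := by
    ext x; simp

/-- The least disturbing channel `ρ ↦ ∑ j, P j J ρ J* P j` associated with
a Naimark dilation `(F, P, J)`. -/
def leastDisturbing {E F : Type*} [NormedAddCommGroup E] [InnerProductSpace ℂ E]
    [FiniteDimensional ℂ E] [NormedAddCommGroup F] [InnerProductSpace ℂ F]
    [FiniteDimensional ℂ F] {Ω : Type*} [Fintype Ω]
    (P : Ω → F →ₗ[ℂ] F) (J : E →ₗ[ℂ] F) : (E →ₗ[ℂ] E) →ₗ[ℂ] (F →ₗ[ℂ] F) :=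
  ∑ j, sandwich (P j ∘ₗ J) (LinearMap.adjoint J ∘ₗ P j)

/-- The Lüders channel `σ ↦ ∑ j, P j σ P j` of a PVM `P`. -/
def ludersChannel {F : Type*} [NormedAddCommGroup F] [InnerProductSpace ℂ F]
    {Ω : Type*} [Fintype Ω] (P : Ω → F →ₗ[ℂ] F) : (F →ₗ[ℂ] F) →ₗ[ℂ] (F →ₗ[ℂ] F) :=
  ∑ j, sandwich (P j) (P j)

/-- Complete positivity of a map on operators, expressed through the existence of
a Kraus decomposition (equivalent to complete positivity in finite dimension). -/
def IsCPMap {E F : Type*} [NormedAddCommGroup E] [InnerProductSpace ℂ E]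
    [FiniteDimensional ℂ E] [NormedAddCommGroup F] [InnerProductSpace ℂ F]
    [FiniteDimensional ℂ F] (Λ : (E →ₗ[ℂ] E) →ₗ[ℂ] (F →ₗ[ℂ] F)) : Prop :=
  ∃ (n : ℕ) (V : Fin n → (E →ₗ[ℂ] F)),
    ∀ ρ, Λ ρ = ∑ i, V i ∘ₗ ρ ∘ₗ LinearMap.adjoint (V i)

/-- A quantum channel: a completely positive trace-preserving linear map. -/
def IsChannel {E F : Type*} [NormedAddCommGroup E] [InnerProductSpace ℂ E]
    [FiniteDimensional ℂ E] [NormedAddCommGroup F] [InnerProductSpace ℂ F]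
    [FiniteDimensional ℂ F] (Λ : (E →ₗ[ℂ] E) →ₗ[ℂ] (F →ₗ[ℂ] F)) : Prop :=
  IsCPMap Λ ∧ ∀ ρ, LinearMap.trace ℂ F (Λ ρ) = LinearMap.trace ℂ E ρ

/-- `Λd` is the Heisenberg dual of `Λ`: `tr[Λ(ρ) B] = tr[ρ Λd(B)]` for all `ρ, B`. -/
def IsHeisenbergDual {E F : Type*} [NormedAddCommGroup E] [InnerProductSpace ℂ E]
    [FiniteDimensional ℂ E] [NormedAddCommGroup F] [InnerProductSpace ℂ F]
    [FiniteDimensional ℂ F] (Λ : (E →ₗ[ℂ] E) →ₗ[ℂ] (F →ₗ[ℂ] F))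
    (Λd : (F →ₗ[ℂ] F) →ₗ[ℂ] (E →ₗ[ℂ] E)) : Prop :=
  ∀ ρ B, LinearMap.trace ℂ F (Λ ρ ∘ₗ B) = LinearMap.trace ℂ E (ρ ∘ₗ Λd B)

/-- Channel post-processing: `Λ₀ ⪯ Λ` iff `Λ₀ = Γ ∘ Λ` for some channel `Γ`. -/
def ChanPP {E F G : Type*} [NormedAddCommGroup E] [InnerProductSpace ℂ E]
    [FiniteDimensional ℂ E] [NormedAddCommGroup F] [InnerProductSpace ℂ F]
    [FiniteDimensional ℂ F] [NormedAddCommGroup G] [InnerProductSpace ℂ G]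
    [FiniteDimensional ℂ G]
    (Λ₀ : (E →ₗ[ℂ] E) →ₗ[ℂ] (G →ₗ[ℂ] G)) (Λ : (E →ₗ[ℂ] E) →ₗ[ℂ] (F →ₗ[ℂ] F)) : Prop :=
  ∃ Γ : (F →ₗ[ℂ] F) →ₗ[ℂ] (G →ₗ[ℂ] G), IsChannel Γ ∧ Λ₀ = Γ ∘ₗ Λ

/-- Post-processing equivalence of channels. -/
def ChanEquiv {E F G : Type*} [NormedAddCommGroup E] [InnerProductSpace ℂ E]
    [FiniteDimensional ℂ E] [NormedAddCommGroup F] [InnerProductSpace ℂ F]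
    [FiniteDimensional ℂ F] [NormedAddCommGroup G] [InnerProductSpace ℂ G]
    [FiniteDimensional ℂ G]
    (Λ₀ : (E →ₗ[ℂ] E) →ₗ[ℂ] (G →ₗ[ℂ] G)) (Λ : (E →ₗ[ℂ] E) →ₗ[ℂ] (F →ₗ[ℂ] F)) : Prop :=
  ChanPP Λ₀ Λ ∧ ChanPP Λ Λ₀

/-- Observable post-processing: `B ⪯ A` via a stochastic matrix `p`. -/
def ObsPP {E : Type*} [NormedAddCommGroup E] [InnerProductSpace ℂ E]
    [FiniteDimensional ℂ E] {Ω₁ Ω₂ : Type*} [Fintype Ω₁] [Fintype Ω₂]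
    (B : Ω₂ → E →ₗ[ℂ] E) (A : Ω₁ → E →ₗ[ℂ] E) : Prop :=
  ∃ p : Ω₂ → Ω₁ → ℝ, (∀ k j, 0 ≤ p k j) ∧ (∀ j, ∑ k, p k j = 1) ∧
    ∀ k, B k = ∑ j, (p k j : ℂ) • A j

/-- Post-processing equivalence of observables. -/
def ObsEquiv {E : Type*} [NormedAddCommGroup E] [InnerProductSpace ℂ E]
    [FiniteDimensional ℂ E] {Ω₁ Ω₂ : Type*} [Fintype Ω₁] [Fintype Ω₂]
    (B : Ω₂ → E →ₗ[ℂ] E) (A : Ω₁ → E →ₗ[ℂ] E) : Prop :=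
  ObsPP B A ∧ ObsPP A B

/-- `B` is a relabeling of `A` (along some function `f` on outcomes). -/
def IsRelabeling {E : Type*} [NormedAddCommGroup E] [InnerProductSpace ℂ E]
    [FiniteDimensional ℂ E] {Ω₁ Ω₂ : Type*} [Fintype Ω₁] [Fintype Ω₂] [DecidableEq Ω₂]
    (B : Ω₂ → E →ₗ[ℂ] E) (A : Ω₁ → E →ₗ[ℂ] E) : Prop :=
  ∃ f : Ω₁ → Ω₂, ∀ k, B k = ∑ j ∈ Finset.univ.filter (fun j => f j = k), A j

/-- A minimally sufficient observable: every observable post-processing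
equivalent to it is a refinement of it (i.e. it is a relabeling of every such observable). -/
def MinSufficient {E : Type*} [NormedAddCommGroup E] [InnerProductSpace ℂ E]
    [FiniteDimensional ℂ E] {Ω : Type*} [Fintype Ω] [DecidableEq Ω]
    (A : Ω → E →ₗ[ℂ] E) : Prop :=
  ∀ (Ω' : Type) (_ : Fintype Ω') (B : Ω' → E →ₗ[ℂ] E),
    IsPOVM B → ObsEquiv B A → IsRelabeling A B

/-- Compatibility of an observable `A` and a channel `Λ`: there is an instrument
with the outcome statistics of `A` whose total channel is `Λ`. -/
def CompatObsChan {E F : Type*} [NormedAddCommGroup E] [InnerProductSpace ℂ E]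
    [FiniteDimensional ℂ E] [NormedAddCommGroup F] [InnerProductSpace ℂ F]
    [FiniteDimensional ℂ F] {Ω : Type*} [Fintype Ω]
    (A : Ω → E →ₗ[ℂ] E) (Λ : (E →ₗ[ℂ] E) →ₗ[ℂ] (F →ₗ[ℂ] F)) : Prop :=
  ∃ I : Ω → ((E →ₗ[ℂ] E) →ₗ[ℂ] (F →ₗ[ℂ] F)),
    (∀ j, IsCPMap (I j)) ∧
    (∀ j ρ, LinearMap.trace ℂ F (I j ρ) = LinearMap.trace ℂ E (ρ ∘ₗ A j)) ∧
    ∑ j, I j = Λ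

/-- Joint measurability (compatibility) of two observables. -/
def JointlyMeasurable {E : Type*} [NormedAddCommGroup E] [InnerProductSpace ℂ E]
    [FiniteDimensional ℂ E] {Ω₁ Ω₂ : Type*} [Fintype Ω₁] [Fintype Ω₂]
    (A : Ω₁ → E →ₗ[ℂ] E) (B : Ω₂ → E →ₗ[ℂ] E) : Prop :=
  ∃ G : Ω₁ × Ω₂ → E →ₗ[ℂ] E, IsPOVM G ∧
    (∀ j, A j = ∑ k, G (j, k)) ∧ (∀ k, B k = ∑ j, G (j, k))

/-- An extreme observable: an extreme point of the convex set of observables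
with the given outcome set. -/
def IsExtremeObs {E : Type*} [NormedAddCommGroup E] [InnerProductSpace ℂ E]
    [FiniteDimensional ℂ E] {Ω : Type*} [Fintype Ω] (A : Ω → E →ₗ[ℂ] E) : Prop :=
  IsPOVM A ∧ ∀ (B₁ B₂ : Ω → E →ₗ[ℂ] E) (t : ℝ), IsPOVM B₁ → IsPOVM B₂ →
    0 < t → t < 1 → (∀ j, A j = (t : ℂ) • B₁ j + ((1 - t : ℝ) : ℂ) • B₂ j) →
    (B₁ = A ∧ B₂ = A)

/-- `|x⟩⟨y|` : the rank-one operator `z ↦ ⟨y, z⟩ x`. -/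
def outer {E : Type*} [NormedAddCommGroup E] [InnerProductSpace ℂ E] (x y : E) :
    E →ₗ[ℂ] E where
  toFun z := (inner ℂ y z : ℂ) • x
  map_add' z w := by simp [inner_add_right, add_smul]
  map_smul' c z := by simp [inner_smul_right, smul_smul]

/-- Loewner order on operators: `S ≤ T` iff `T - S` is positive semidefinite. -/
def LoewnerLE {E : Type*} [NormedAddCommGroup E] [InnerProductSpace ℂ E]
    [FiniteDimensional ℂ E] (S T : E →ₗ[ℂ] E) : Prop :=
  IsPosOp (T - S)

/-- Compression of an operator `T` on `F` to a subspace `S`: `P_S ∘ T ∘ incl_S`. -/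
def compressTo {F : Type*} [NormedAddCommGroup F] [InnerProductSpace ℂ F]
    [FiniteDimensional ℂ F] (S : Submodule ℂ F) (T : F →ₗ[ℂ] F) : ↥S →ₗ[ℂ] ↥S :=
  have := FiniteDimensional.complete ℂ ↥S
  (S.orthogonalProjectionOnto).toLinearMap ∘ₗ T ∘ₗ S.subtype

end


noncomputable section SupportAux

open LinearMap

variable {E : Type*} [NormedAddCommGroup E] [InnerProductSpace ℂ E] [FiniteDimensional ℂ E]

local notation "⟪" x ", " y "⟫" => @inner ℂ _ _ x y

lemma outer_apply' (x y z : E) : outer x y z = ⟪y, z⟫ • x := rfl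

lemma trace_endo_cpx (f : ℂ →ₗ[ℂ] ℂ) : LinearMap.trace ℂ ℂ f = f 1 := by
  have hf : f = f 1 • LinearMap.id := by
    apply LinearMap.ext
    intro c
    have : f c = f (c • (1 : ℂ)) := by simp
    rw [this, map_smul]
    simp [mul_comm]
  rw [hf, map_smul, LinearMap.trace_id]
  simp

lemma trace_outer (x y : E) : LinearMap.trace ℂ E (outer x y) = ⟪y, x⟫ := by
  have h : outer x y
      = (LinearMap.toSpanSingleton ℂ E x) ∘ₗ ((innerSL ℂ y).toLinearMap) := by
    ext z
    simp [outer_apply', LinearMap.toSpanSingleton_apply]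
  rw [h, LinearMap.trace_comp_comm', trace_endo_cpx]
  simp [LinearMap.toSpanSingleton_apply]

lemma outer_comp (x y : E) (T : E →ₗ[ℂ] E) :
    outer x y ∘ₗ T = outer x (LinearMap.adjoint T y) := by
  ext z
  simp [outer_apply', LinearMap.adjoint_inner_left]

lemma eq_of_trace_comp {S T : E →ₗ[ℂ] E}
    (h : ∀ ρ : E →ₗ[ℂ] E, LinearMap.trace ℂ E (ρ ∘ₗ S) = LinearMap.trace ℂ E (ρ ∘ₗ T)) :
    S = T := by
  ext x
  apply ext_inner_left ℂ
  intro y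
  have := h (outer x y)
  rw [outer_comp, outer_comp, trace_outer, trace_outer,
    LinearMap.adjoint_inner_left, LinearMap.adjoint_inner_left] at this
  exact this

lemma IsPosOp.re_nonneg {T : E →ₗ[ℂ] E} (hT : IsPosOp T) (x : E) :
    0 ≤ (⟪T x, x⟫).re :=
  (Complex.nonneg_iff.mp (hT.2 x)).1

lemma IsPosOp.im_zero {T : E →ₗ[ℂ] E} (hT : IsPosOp T) (x : E) :
    (⟪T x, x⟫).im = 0 :=
  ((Complex.nonneg_iff.mp (hT.2 x)).2).symm

lemma IsPosOp.apply_eq_zero {T : E →ₗ[ℂ] E} (hT : IsPosOp T) {x : E}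
    (hx : ⟪T x, x⟫ = 0) : T x = 0 := by
  have key : ∀ v : E, (⟪T x, v⟫).re = 0 := by
    intro v
    set a : ℝ := (⟪T v, v⟫).re with ha
    set b : ℝ := (⟪T x, v⟫).re with hb
    have ha0 : 0 ≤ a := hT.re_nonneg v
    have hq : ∀ t : ℝ, 0 ≤ a * t ^ 2 + 2 * b * t := by
      intro t
      have h0 := hT.re_nonneg (x + (t : ℂ) • v)
      have hexp : ⟪T (x + (t : ℂ) • v), x + (t : ℂ) • v⟫
          = ⟪T x, x⟫ + (t : ℂ) * ⟪T x, v⟫ + (t : ℂ) * ⟪T v, x⟫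
            + (t : ℂ) * (t : ℂ) * ⟪T v, v⟫ := by
        rw [map_add, map_smul]
        rw [inner_add_left, inner_add_right, inner_add_right]
        rw [inner_smul_left, inner_smul_right, inner_smul_left, inner_smul_right]
        push_cast
        ring_nf
        simp [Complex.conj_ofReal]
        ring
      have hsym : ⟪T v, x⟫ = starRingEnd ℂ ⟪T x, v⟫ := by
        conv_lhs => rw [← hT.1]
        rw [LinearMap.adjoint_inner_left]
        exact (inner_conj_symm _ _).symm
      rw [hexp, hx] at h0
      have him : (⟪T v, v⟫).im = 0 := hT.im_zero v
      simp only [Complex.add_re, Complex.mul_re, Complex.ofReal_re, Complex.ofReal_im,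
        hsym, Complex.conj_re, Complex.conj_im, Complex.zero_re, zero_mul, him,
        mul_zero, sub_zero, zero_sub, zero_mul, neg_zero, zero_add] at h0
      rw [← hb] at h0
      rw [← ha] at h0
      nlinarith [h0]
    have hpos : (0:ℝ) < a + 1 := by linarith
    have h := hq (-b / (a + 1))
    have h2 : 0 ≤ (a * (-b/(a+1))^2 + 2*b*(-b/(a+1))) * (a+1)^2 :=
      mul_nonneg h (by positivity)
    have h3 : (a * (-b/(a+1))^2 + 2*b*(-b/(a+1))) * (a+1)^2
        = a*b^2 - 2*b^2*(a+1) := by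
      field_simp
      ring
    have h4 : b^2 ≤ 0 := by nlinarith [h2, h3]
    have h5 : b^2 = 0 := le_antisymm h4 (sq_nonneg b)
    exact pow_eq_zero_iff two_ne_zero |>.mp h5
  have key2 : ∀ v : E, ⟪T x, v⟫ = 0 := by
    intro v
    have h1 := key v
    have h2 := key (Complex.I • v)
    rw [inner_smul_right] at h2
    simp [Complex.mul_re, Complex.I_re, Complex.I_im] at h2
    apply Complex.ext
    · exact h1
    · simpa using h2
  have := ext_inner_right ℂ (x := T x) (y := 0) (fun v => by simp [key2 v])
  exact this

lemma selfadj_inner_comm {T : E →ₗ[ℂ] E} (h : LinearMap.adjoint T = T) (z w : E) :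
    ⟪T z, w⟫ = ⟪z, T w⟫ := by
  conv_lhs => rw [← h]
  exact LinearMap.adjoint_inner_left T w z

lemma inner_self_nonneg' (z : E) : (0 : ℂ) ≤ ⟪z, z⟫ := by
  rw [Complex.nonneg_iff]
  constructor
  · simpa using inner_self_nonneg (𝕜 := ℂ) (x := z)
  · have := inner_self_im (𝕜 := ℂ) z
    simp only [RCLike.im_to_complex] at this
    exact this.symm

lemma isOrthoProj_apply_apply {R : E →ₗ[ℂ] E} (hR : IsOrthoProj R) (x : E) :
    R (R x) = R x := LinearMap.ext_iff.mp hR.2 x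

lemma isOrthoProj_qf {R : E →ₗ[ℂ] E} (hR : IsOrthoProj R) (x : E) :
    ⟪R x, x⟫ = ⟪R x, R x⟫ := by
  calc ⟪R x, x⟫ = ⟪R (R x), x⟫ := by rw [isOrthoProj_apply_apply hR]
    _ = ⟪R x, R x⟫ := selfadj_inner_comm hR.1 (R x) x

lemma adjoint_one' : LinearMap.adjoint (1 : E →ₗ[ℂ] E) = 1 :=
  ((LinearMap.eq_adjoint_iff (1 : E →ₗ[ℂ] E) 1).mpr fun _ _ => rfl).symm

lemma IsOrthoProj.isPos {R : E →ₗ[ℂ] E} (hR : IsOrthoProj R) : IsPosOp R :=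
  ⟨hR.1, fun x => by rw [isOrthoProj_qf hR]; exact inner_self_nonneg' _⟩

lemma IsOrthoProj.one_sub_isPos {R : E →ₗ[ℂ] E} (hR : IsOrthoProj R) :
    IsPosOp (1 - R) := by
  constructor
  · rw [map_sub, hR.1, adjoint_one']
  · intro x
    have h1 : ⟪R x, x - R x⟫ = 0 := by
      rw [inner_sub_right, isOrthoProj_qf hR, sub_self]
    have h2 : ⟪x - R x, R x⟫ = 0 := by
      rw [← inner_conj_symm, h1, map_zero]
    have h3 : (1 - R) x = x - R x := by simp
    have key : ⟪x - R x, x⟫ = ⟪x - R x, x - R x⟫ := by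
      have e : ⟪x - R x, x - R x⟫ = ⟪x - R x, x⟫ - ⟪x - R x, R x⟫ :=
        inner_sub_right _ _ _
      rw [e, h2, sub_zero]
    rw [h3, key]
    exact inner_self_nonneg' _

lemma effect_norm_sq_le {T : E →ₗ[ℂ] E} (h0 : IsPosOp T) (h1 : IsPosOp (1 - T))
    (y : E) : ‖T y‖ ^ 2 ≤ (⟪T y, y⟫).re := by
  set u := T y with hu
  have hself : ∀ z w : E, ⟪T z, w⟫ = ⟪z, T w⟫ := by
    intro z w
    conv_lhs => rw [← h0.1]
    rw [LinearMap.adjoint_inner_left]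
  have hsq : ∀ z : E, (⟪z, z⟫).re = ‖z‖ ^ 2 := by
    intro z
    rw [inner_self_eq_norm_sq_to_K]
    simp [← Complex.ofReal_pow]
  have hA : 0 ≤ (⟪T (y - u), y - u⟫).re := h0.re_nonneg (y - u)
  have hexp : ⟪T (y - u), y - u⟫ = ⟪T y, y⟫ - ⟪u, u⟫ - ⟪u, u⟫ + ⟪T u, u⟫ := by
    rw [map_sub, inner_sub_left, inner_sub_right, inner_sub_right]
    have e1 : ⟪T y, u⟫ = ⟪u, u⟫ := by rw [← hu]
    have e2 : ⟪T u, y⟫ = ⟪u, u⟫ := by rw [hself u y, ← hu]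
    rw [e1, e2]
    ring
  have hC : (⟪T u, u⟫).re ≤ ‖u‖ ^ 2 := by
    have := h1.re_nonneg u
    have hh : ⟪(1 - T) u, u⟫ = ⟪u, u⟫ - ⟪T u, u⟫ := by
      simp [inner_sub_left]
    rw [hh] at this
    rw [Complex.sub_re, hsq u] at this
    linarith
  rw [hexp] at hA
  simp only [Complex.add_re, Complex.sub_re] at hA
  rw [hsq u] at hA
  linarith

section ProjOp

variable (M : Submodule ℂ E)

def projOp : E →ₗ[ℂ] E :=
  haveI := FiniteDimensional.complete ℂ M
  M.subtype ∘ₗ (M.orthogonalProjectionOnto).toLinearMap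

variable {M}

lemma projOp_mem (x : E) : projOp M x ∈ M := by
  haveI := FiniteDimensional.complete ℂ M
  exact Submodule.coe_mem _

lemma projOp_eq_self {x : E} (hx : x ∈ M) : projOp M x = x := by
  haveI := FiniteDimensional.complete ℂ M
  have := Submodule.orthogonalProjectionOnto_mem_subspace_eq_self (K := M) ⟨x, hx⟩
  exact congrArg Subtype.val this

lemma projOp_eq_zero {x : E} (hx : x ∈ Mᗮ) : projOp M x = 0 := by
  haveI := FiniteDimensional.complete ℂ M
  have := Submodule.orthogonalProjectionOnto_apply_of_mem_orthogonal hx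
  exact congrArg Subtype.val this

lemma sub_projOp_mem (x : E) : x - projOp M x ∈ Mᗮ := by
  haveI := FiniteDimensional.complete ℂ M
  exact Submodule.sub_starProjection_mem_orthogonal x

lemma projOp_adjoint : LinearMap.adjoint (projOp M) = projOp M := by
  haveI := FiniteDimensional.complete ℂ M
  refine ((LinearMap.eq_adjoint_iff (projOp M) (projOp M)).mpr ?_).symm
  intro x y
  exact Submodule.inner_starProjection_left_eq_right M x y

lemma projOp_isOrthoProj : IsOrthoProj (projOp M) :=
  ⟨projOp_adjoint, by ext x; exact projOp_eq_self (projOp_mem x)⟩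

end ProjOp

end SupportAux

section Main

variable {H K : Type*}
    [NormedAddCommGroup H] [InnerProductSpace ℂ H] [FiniteDimensional ℂ H]
    [NormedAddCommGroup K] [InnerProductSpace ℂ K] [FiniteDimensional ℂ K]

local notation "⟪" x ", " y "⟫" => @inner ℂ _ _ x y

theorem stmt_7' (Λ : (H →ₗ[ℂ] H) →ₗ[ℂ] (K →ₗ[ℂ] K)) (hΛ : IsChannel Λ)
    (Λd : (K →ₗ[ℂ] K) →ₗ[ℂ] (H →ₗ[ℂ] H)) (hΛd : IsHeisenbergDual Λ Λd) :
    (∃! R : K →ₗ[ℂ] K, IsOrthoProj R ∧ Λd R = (1 : H →ₗ[ℂ] H) ∧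
      ∀ Q : K →ₗ[ℂ] K, IsOrthoProj Q → LoewnerLE Q R → Λd Q = (1 : H →ₗ[ℂ] H) → Q = R) ∧
    ∀ R : K →ₗ[ℂ] K,
      (IsOrthoProj R ∧ Λd R = (1 : H →ₗ[ℂ] H) ∧
        ∀ Q : K →ₗ[ℂ] K, IsOrthoProj Q → LoewnerLE Q R → Λd Q = (1 : H →ₗ[ℂ] H) → Q = R) →
      ((∀ B : K →ₗ[ℂ] K,
          Λd B = Λd (R ∘ₗ B) ∧ Λd B = Λd (B ∘ₗ R) ∧ Λd B = Λd (R ∘ₗ B ∘ₗ R)) ∧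
       (∀ E₀ : K →ₗ[ℂ] K, IsPosOp E₀ → Λd E₀ = 0 → R ∘ₗ E₀ ∘ₗ R = 0) ∧
       (∀ E₀ : K →ₗ[ℂ] K, IsPosOp E₀ → IsPosOp ((1 : K →ₗ[ℂ] K) - E₀) →
          IsOrthoProj (Λd E₀) →
          IsOrthoProj (R ∘ₗ E₀ ∘ₗ R) ∧ R ∘ₗ E₀ = E₀ ∘ₗ R)) := by
  classical
  obtain ⟨⟨n, V, hV⟩, htr⟩ := hΛ
  -- the dual in Kraus form
  have cyc : ∀ (ρ : H →ₗ[ℂ] H) (B : K →ₗ[ℂ] K) (i : Fin n),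
      LinearMap.trace ℂ K ((V i ∘ₗ ρ ∘ₗ LinearMap.adjoint (V i)) ∘ₗ B)
        = LinearMap.trace ℂ H (ρ ∘ₗ (LinearMap.adjoint (V i) ∘ₗ B ∘ₗ V i)) := by
    intro ρ B i
    have e1 : (V i ∘ₗ ρ ∘ₗ LinearMap.adjoint (V i)) ∘ₗ B
        = V i ∘ₗ (ρ ∘ₗ (LinearMap.adjoint (V i) ∘ₗ B)) := rfl
    have e2 : (ρ ∘ₗ (LinearMap.adjoint (V i) ∘ₗ B)) ∘ₗ V i
        = ρ ∘ₗ (LinearMap.adjoint (V i) ∘ₗ B ∘ₗ V i) := rfl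
    rw [e1, ← e2, ← LinearMap.trace_comp_comm']
  have hdual : ∀ B : K →ₗ[ℂ] K,
      Λd B = ∑ i, LinearMap.adjoint (V i) ∘ₗ B ∘ₗ V i := by
    intro B
    apply eq_of_trace_comp
    intro ρ
    calc LinearMap.trace ℂ H (ρ ∘ₗ Λd B)
        = LinearMap.trace ℂ K (Λ ρ ∘ₗ B) := (hΛd ρ B).symm
      _ = ∑ i, LinearMap.trace ℂ K ((V i ∘ₗ ρ ∘ₗ LinearMap.adjoint (V i)) ∘ₗ B) := by
          rw [hV ρ]
          have e : (∑ i, V i ∘ₗ ρ ∘ₗ LinearMap.adjoint (V i)) ∘ₗ B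
              = ∑ i, (V i ∘ₗ ρ ∘ₗ LinearMap.adjoint (V i)) ∘ₗ B := by
            ext x
            simp [LinearMap.sum_apply]
          rw [e, map_sum]
      _ = ∑ i, LinearMap.trace ℂ H (ρ ∘ₗ (LinearMap.adjoint (V i) ∘ₗ B ∘ₗ V i)) :=
          Finset.sum_congr rfl fun i _ => cyc ρ B i
      _ = LinearMap.trace ℂ H (ρ ∘ₗ ∑ i, LinearMap.adjoint (V i) ∘ₗ B ∘ₗ V i) := by
          have e : ρ ∘ₗ (∑ i, LinearMap.adjoint (V i) ∘ₗ B ∘ₗ V i)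
              = ∑ i, ρ ∘ₗ (LinearMap.adjoint (V i) ∘ₗ B ∘ₗ V i) := by
            ext x
            simp [LinearMap.sum_apply]
          rw [e, map_sum]
  have hΛd1 : Λd 1 = 1 := by
    apply eq_of_trace_comp
    intro ρ
    have h2 : LinearMap.trace ℂ K (Λ ρ ∘ₗ 1) = LinearMap.trace ℂ H (ρ ∘ₗ Λd 1) := hΛd ρ 1
    have h3 : Λ ρ ∘ₗ (1 : K →ₗ[ℂ] K) = Λ ρ := by ext x; rfl
    have h4 : ρ ∘ₗ (1 : H →ₗ[ℂ] H) = ρ := by ext x; rfl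
    rw [h3] at h2
    rw [h4, ← h2, htr ρ]
  have hiso : ∑ i, LinearMap.adjoint (V i) ∘ₗ V i = 1 := by
    have h2 := hdual 1
    rw [hΛd1] at h2
    rw [h2]
    refine Finset.sum_congr rfl fun i _ => rfl
  set M : Submodule ℂ K := ⨆ i : Fin n, LinearMap.range (V i) with hMdef
  set R₀ : K →ₗ[ℂ] K := projOp M with hR₀def
  have hVmem : ∀ (i : Fin n) (x : H), V i x ∈ M := fun i x =>
    Submodule.mem_iSup_of_mem i (LinearMap.mem_range_self (V i) x)
  have hMle : ∀ f : K →ₗ[ℂ] K, (∀ i x, f (V i x) = 0) → ∀ {y : K}, y ∈ M → f y = 0 := by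
    intro f hf y hy
    have hle : M ≤ LinearMap.ker f := by
      refine iSup_le fun i => ?_
      rintro _ ⟨x, rfl⟩
      exact LinearMap.mem_ker.mpr (hf i x)
    exact LinearMap.mem_ker.mp (hle hy)
  have hR₀proj : IsOrthoProj R₀ := projOp_isOrthoProj
  have hR₀V : ∀ i x, R₀ (V i x) = V i x := fun i x => projOp_eq_self (hVmem i x)
  have hΛdR₀ : Λd R₀ = 1 := by
    rw [hdual, ← hiso]
    refine Finset.sum_congr rfl fun i _ => ?_
    ext x
    simp only [LinearMap.comp_apply]
    rw [hR₀V i x]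
  have killer : ∀ W : K →ₗ[ℂ] K, IsPosOp W → Λd W = 0 → ∀ i x, W (V i x) = 0 := by
    intro W hW hWd i x
    have h0 : (Λd W) x = 0 := by rw [hWd]; rfl
    rw [hdual] at h0
    have hsum : ∑ j, ⟪W (V j x), V j x⟫ = 0 := by
      calc ∑ j, ⟪W (V j x), V j x⟫
          = ∑ j, ⟪(LinearMap.adjoint (V j) ∘ₗ W ∘ₗ V j) x, x⟫ := by
            refine Finset.sum_congr rfl fun j _ => ?_
            simp only [LinearMap.comp_apply]
            rw [LinearMap.adjoint_inner_left]
        _ = ⟪(∑ j, LinearMap.adjoint (V j) ∘ₗ W ∘ₗ V j) x, x⟫ := by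
            rw [LinearMap.sum_apply, sum_inner]
        _ = 0 := by rw [h0, inner_zero_left]
    have hterm := (Finset.sum_eq_zero_iff_of_nonneg
      (fun j _ => hW.2 (V j x))).mp hsum
    exact hW.apply_eq_zero (hterm i (Finset.mem_univ i))
  have fixer : ∀ R : K →ₗ[ℂ] K, IsOrthoProj R → Λd R = 1 → ∀ i x, R (V i x) = V i x := by
    intro R hR hRd i x
    have h1 : Λd (1 - R) = 0 := by rw [map_sub, hRd, hΛd1, sub_self]
    have h2 := killer (1 - R) hR.one_sub_isPos h1 i x
    have h3 : (1 - R) (V i x) = V i x - R (V i x) := by simp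
    rw [h3] at h2
    exact (sub_eq_zero.mp h2).symm
  have hmin : ∀ Q : K →ₗ[ℂ] K, IsOrthoProj Q → LoewnerLE Q R₀ → Λd Q = 1 → Q = R₀ := by
    intro Q hQ hle hQd
    have hW : IsPosOp (R₀ - Q) := hle
    have hWd : Λd (R₀ - Q) = 0 := by rw [map_sub, hΛdR₀, hQd, sub_self]
    have hkill := killer _ hW hWd
    have hMkill : ∀ {y : K}, y ∈ M → (R₀ - Q) y = 0 := fun {y} => hMle (R₀ - Q) hkill
    ext x
    have hQm : Q (R₀ x) = R₀ x := by
      have h := hMkill (projOp_mem x)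
      have h2 : R₀ (R₀ x) - Q (R₀ x) = 0 := by
        simpa [LinearMap.sub_apply] using h
      rw [isOrthoProj_apply_apply hR₀proj] at h2
      exact (sub_eq_zero.mp h2).symm
    have hQperp : Q (x - R₀ x) = 0 := by
      have hy : x - R₀ x ∈ Mᗮ := sub_projOp_mem x
      have hR₀y : R₀ (x - R₀ x) = 0 := projOp_eq_zero hy
      have h5 : ⟪Q (x - R₀ x), x - R₀ x⟫ = 0 := by
        have hp1 : (0 : ℂ) ≤ ⟪Q (x - R₀ x), x - R₀ x⟫ := hQ.isPos.2 _
        have hp2 : (0 : ℂ) ≤ ⟪(R₀ - Q) (x - R₀ x), x - R₀ x⟫ := hW.2 _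
        have he : ⟪(R₀ - Q) (x - R₀ x), x - R₀ x⟫ = -⟪Q (x - R₀ x), x - R₀ x⟫ := by
          simp [LinearMap.sub_apply, inner_sub_left, hR₀y]
          ring
        rw [he] at hp2
        exact le_antisymm (neg_nonneg.mp hp2) hp1
      exact hQ.isPos.apply_eq_zero h5
    have hxdec : x = R₀ x + (x - R₀ x) := by abel
    calc Q x = Q (R₀ x + (x - R₀ x)) := by rw [← hxdec]
      _ = Q (R₀ x) + Q (x - R₀ x) := map_add _ _ _
      _ = R₀ x := by rw [hQm, hQperp, add_zero]
  have huniq : ∀ R : K →ₗ[ℂ] K,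
      (IsOrthoProj R ∧ Λd R = (1 : H →ₗ[ℂ] H) ∧
        ∀ Q : K →ₗ[ℂ] K, IsOrthoProj Q → LoewnerLE Q R → Λd Q = (1 : H →ₗ[ℂ] H) → Q = R) →
      R = R₀ := by
    rintro R ⟨hR, hRd, hRmin⟩
    have hfix := fixer R hR hRd
    have hRM : ∀ {y : K}, y ∈ M → R y = y := by
      intro y hy
      have h := hMle (R - 1) (fun i x => by simp [hfix i x]) hy
      have : R y - y = 0 := by simpa [LinearMap.sub_apply] using h
      exact sub_eq_zero.mp this
    have hle : LoewnerLE R₀ R := by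
      constructor
      · rw [map_sub, hR.1, hR₀proj.1]
      · intro x
        have hqR : ⟪R x, x⟫ = ⟪R x, R x⟫ := isOrthoProj_qf hR x
        have hqR₀ : ⟪R₀ x, x⟫ = ⟪R₀ x, R₀ x⟫ := isOrthoProj_qf hR₀proj x
        have hnorm : ‖R₀ x‖ ≤ ‖R x‖ := by
          have h1 : ⟪R₀ x, x - R x⟫ = 0 := by
            have hRR₀ : R (R₀ x) = R₀ x := hRM (projOp_mem x)
            calc ⟪R₀ x, x - R x⟫ = ⟪R (R₀ x), x - R x⟫ := by rw [hRR₀]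
              _ = ⟪R₀ x, R (x - R x)⟫ := selfadj_inner_comm hR.1 _ _
              _ = 0 := by
                  rw [map_sub, isOrthoProj_apply_apply hR, sub_self, inner_zero_right]
          have h2 : ⟪R₀ x, x⟫ = ⟪R₀ x, R x⟫ := by
            have he := inner_sub_right (𝕜 := ℂ) (R₀ x) x (R x)
            rw [h1] at he
            exact (sub_eq_zero.mp he.symm)
          have h3 : ‖R₀ x‖ ^ 2 ≤ ‖R₀ x‖ * ‖R x‖ := by
            have h4 : (⟪R₀ x, R x⟫ : ℂ).re = ‖R₀ x‖ ^ 2 := by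
              rw [← h2, hqR₀, inner_self_eq_norm_sq_to_K]
              simp [← Complex.ofReal_pow]
            have h5 : (⟪R₀ x, R x⟫ : ℂ).re ≤ ‖⟪R₀ x, R x⟫‖ := Complex.re_le_norm _
            have h6 := norm_inner_le_norm (𝕜 := ℂ) (R₀ x) (R x)
            linarith
          nlinarith [norm_nonneg (R₀ x), norm_nonneg (R x), sq_nonneg (‖R₀ x‖ - ‖R x‖)]
        have he : ⟪(R - R₀) x, x⟫ = ((‖R x‖ ^ 2 - ‖R₀ x‖ ^ 2 : ℝ) : ℂ) := by
          rw [LinearMap.sub_apply, inner_sub_left, hqR, hqR₀,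
            inner_self_eq_norm_sq_to_K, inner_self_eq_norm_sq_to_K]
          norm_cast
        rw [he]
        exact Complex.zero_le_real.mpr (by nlinarith [hnorm, norm_nonneg (R₀ x), norm_nonneg (R x)])
    exact (hRmin R₀ hR₀proj hle hΛdR₀).symm
  constructor
  · exact ⟨R₀, ⟨hR₀proj, hΛdR₀, hmin⟩, huniq⟩
  · rintro R hRtriple
    have hReq : R = R₀ := huniq R hRtriple
    obtain ⟨hR, hRd, -⟩ := hRtriple
    have hfix : ∀ i x, R (V i x) = V i x := fixer R hR hRd
    have happ : ∀ (i : Fin n) (z : K),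
        LinearMap.adjoint (V i) (R z) = LinearMap.adjoint (V i) z := by
      intro i z
      have hcompV : R ∘ₗ V i = V i := LinearMap.ext (hfix i)
      have h := congrArg LinearMap.adjoint hcompV
      rw [LinearMap.adjoint_comp, hR.1] at h
      exact LinearMap.ext_iff.mp h z
    refine ⟨?_, ?_, ?_⟩
    · -- (i)
      intro B
      refine ⟨?_, ?_, ?_⟩ <;>
      · rw [hdual, hdual]
        refine Finset.sum_congr rfl fun i _ => ?_
        ext x
        simp only [LinearMap.comp_apply]
        simp [hfix, happ]
    · -- (ii)
      intro E₀ hE₀ hE₀d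
      have hkill := killer E₀ hE₀ hE₀d
      have hE₀R : E₀ ∘ₗ R = 0 := by
        rw [hReq]
        ext x
        exact hMle E₀ hkill (projOp_mem x)
      have : R ∘ₗ E₀ ∘ₗ R = R ∘ₗ (E₀ ∘ₗ R) := rfl
      rw [this, hE₀R]
      ext x
      simp
    · -- (iii)
      intro E₀ hE₀ hE₀1 hPproj
      set P : H →ₗ[ℂ] H := Λd E₀ with hPdef
      have hEV : ∀ (i : Fin n) (x : H), E₀ (V i x) = V i (P x) := by
        intro i x
        have s1 : ∑ j, ⟪E₀ (V j x), V j (P x)⟫ = ⟪P x, P x⟫ := by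
          calc ∑ j, ⟪E₀ (V j x), V j (P x)⟫
              = ∑ j, ⟪(LinearMap.adjoint (V j) ∘ₗ E₀ ∘ₗ V j) x, P x⟫ := by
                refine Finset.sum_congr rfl fun j _ => ?_
                simp only [LinearMap.comp_apply]
                rw [LinearMap.adjoint_inner_left]
            _ = ⟪(∑ j, LinearMap.adjoint (V j) ∘ₗ E₀ ∘ₗ V j) x, P x⟫ := by
                rw [LinearMap.sum_apply, sum_inner]
            _ = ⟪P x, P x⟫ := by rw [← hdual E₀]
        have s2 : ∑ j, ⟪V j (P x), V j (P x)⟫ = ⟪P x, P x⟫ := by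
          calc ∑ j, ⟪V j (P x), V j (P x)⟫
              = ∑ j, ⟪(LinearMap.adjoint (V j) ∘ₗ V j) (P x), P x⟫ := by
                refine Finset.sum_congr rfl fun j _ => ?_
                simp only [LinearMap.comp_apply]
                rw [LinearMap.adjoint_inner_left]
            _ = ⟪(∑ j, LinearMap.adjoint (V j) ∘ₗ V j) (P x), P x⟫ := by
                rw [LinearMap.sum_apply, sum_inner]
            _ = ⟪P x, P x⟫ := by rw [hiso]; rfl
        have s3 : ∑ j, ‖E₀ (V j x)‖ ^ 2 ≤ (⟪P x, P x⟫ : ℂ).re := by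
          have hsum2 : ∑ j, ⟪E₀ (V j x), V j x⟫ = ⟪P x, x⟫ := by
            calc ∑ j, ⟪E₀ (V j x), V j x⟫
                = ∑ j, ⟪(LinearMap.adjoint (V j) ∘ₗ E₀ ∘ₗ V j) x, x⟫ := by
                  refine Finset.sum_congr rfl fun j _ => ?_
                  simp only [LinearMap.comp_apply]
                  rw [LinearMap.adjoint_inner_left]
              _ = ⟪(∑ j, LinearMap.adjoint (V j) ∘ₗ E₀ ∘ₗ V j) x, x⟫ := by
                  rw [LinearMap.sum_apply, sum_inner]
              _ = ⟪P x, x⟫ := by rw [← hdual E₀]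
          have hre : ∑ j, (⟪E₀ (V j x), V j x⟫ : ℂ).re = (⟪P x, x⟫ : ℂ).re := by
            rw [← Complex.re_sum, hsum2]
          have hqf : ⟪P x, x⟫ = ⟪P x, P x⟫ := isOrthoProj_qf hPproj x
          calc ∑ j, ‖E₀ (V j x)‖ ^ 2
              ≤ ∑ j, (⟪E₀ (V j x), V j x⟫ : ℂ).re :=
                Finset.sum_le_sum fun j _ => effect_norm_sq_le hE₀ hE₀1 (V j x)
            _ = (⟪P x, x⟫ : ℂ).re := hre
            _ = (⟪P x, P x⟫ : ℂ).re := by rw [hqf]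
        have hnormsq : ∀ z : K, (⟪z, z⟫ : ℂ).re = ‖z‖ ^ 2 := by
          intro z
          rw [inner_self_eq_norm_sq_to_K]
          simp [← Complex.ofReal_pow]
        have main : ∑ j, ‖E₀ (V j x) - V j (P x)‖ ^ 2 ≤ 0 := by
          have expand : ∀ j : Fin n, ‖E₀ (V j x) - V j (P x)‖ ^ 2
              = ‖E₀ (V j x)‖ ^ 2 - 2 * (⟪E₀ (V j x), V j (P x)⟫ : ℂ).re
                + ‖V j (P x)‖ ^ 2 := by
            intro j
            have h := norm_sub_sq (𝕜 := ℂ) (E₀ (V j x)) (V j (P x))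
            simpa using h
          have e1 : ∑ j, (⟪E₀ (V j x), V j (P x)⟫ : ℂ).re = (⟪P x, P x⟫ : ℂ).re := by
            rw [← Complex.re_sum, s1]
          have e2 : ∑ j, ‖V j (P x)‖ ^ 2 = (⟪P x, P x⟫ : ℂ).re := by
            have h := congrArg Complex.re s2
            rw [Complex.re_sum] at h
            calc ∑ j, ‖V j (P x)‖ ^ 2
                = ∑ j, (⟪V j (P x), V j (P x)⟫ : ℂ).re :=
                  Finset.sum_congr rfl fun j _ => (hnormsq _).symm
              _ = (⟪P x, P x⟫ : ℂ).re := h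
          calc ∑ j, ‖E₀ (V j x) - V j (P x)‖ ^ 2
              = ∑ j, (‖E₀ (V j x)‖ ^ 2 - 2 * (⟪E₀ (V j x), V j (P x)⟫ : ℂ).re
                  + ‖V j (P x)‖ ^ 2) := Finset.sum_congr rfl fun j _ => expand j
            _ = (∑ j, ‖E₀ (V j x)‖ ^ 2)
                  - 2 * (∑ j, (⟪E₀ (V j x), V j (P x)⟫ : ℂ).re)
                  + ∑ j, ‖V j (P x)‖ ^ 2 := by
                rw [Finset.sum_add_distrib, Finset.sum_sub_distrib, ← Finset.mul_sum]
            _ ≤ 0 := by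
                rw [e1, e2]
                linarith [s3]
        have hterm : ‖E₀ (V i x) - V i (P x)‖ ^ 2 = 0 := by
          have hnn : ∀ j ∈ Finset.univ, (0:ℝ) ≤ ‖E₀ (V j x) - V j (P x)‖ ^ 2 :=
            fun j _ => sq_nonneg _
          have hz := (Finset.sum_eq_zero_iff_of_nonneg hnn).mp
            (le_antisymm main (Finset.sum_nonneg hnn))
          exact hz i (Finset.mem_univ i)
        have := norm_eq_zero.mp (pow_eq_zero_iff two_ne_zero |>.mp hterm)
        exact sub_eq_zero.mp this
      have hE₀mem : ∀ {y : K}, y ∈ M → E₀ y ∈ M := by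
        intro y hy
        have hle : M ≤ Submodule.comap E₀ M := by
          refine iSup_le fun i => ?_
          rintro _ ⟨x, rfl⟩
          rw [Submodule.mem_comap, hEV i x]
          exact hVmem i (P x)
        exact hle hy
      have hE₀idem : ∀ {y : K}, y ∈ M → E₀ (E₀ y) = E₀ y := by
        intro y hy
        have h := hMle (E₀ ∘ₗ E₀ - E₀) (fun i x => by
          simp only [LinearMap.sub_apply, LinearMap.comp_apply]
          rw [hEV i x, hEV i (P x), isOrthoProj_apply_apply hPproj, sub_self]) hy
        have : E₀ (E₀ y) - E₀ y = 0 := by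
          simpa [LinearMap.sub_apply, LinearMap.comp_apply] using h
        exact sub_eq_zero.mp this
      have hRER : R ∘ₗ E₀ ∘ₗ R = E₀ ∘ₗ R := by
        rw [hReq]
        ext x
        simp only [LinearMap.comp_apply]
        exact projOp_eq_self (hE₀mem (projOp_mem x))
      have hadjER : LinearMap.adjoint (E₀ ∘ₗ R) = R ∘ₗ E₀ := by
        rw [LinearMap.adjoint_comp, hE₀.1, hR.1]
      have hadjRER : LinearMap.adjoint (R ∘ₗ E₀ ∘ₗ R) = R ∘ₗ E₀ ∘ₗ R := by
        have e : R ∘ₗ E₀ ∘ₗ R = R ∘ₗ (E₀ ∘ₗ R) := rfl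
        rw [e, LinearMap.adjoint_comp, hadjER, hR.1]
        rfl
      have hcomm : R ∘ₗ E₀ = E₀ ∘ₗ R := by
        calc R ∘ₗ E₀ = LinearMap.adjoint (E₀ ∘ₗ R) := hadjER.symm
          _ = LinearMap.adjoint (R ∘ₗ E₀ ∘ₗ R) := by rw [hRER]
          _ = R ∘ₗ E₀ ∘ₗ R := hadjRER
          _ = E₀ ∘ₗ R := hRER
      refine ⟨⟨hadjRER, ?_⟩, hcomm⟩
      rw [hRER]
      ext x
      simp only [LinearMap.comp_apply]
      rw [hReq]
      have h1 : projOp M (E₀ (projOp M x)) = E₀ (projOp M x) :=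
        projOp_eq_self (hE₀mem (projOp_mem x))
      rw [h1]
      exact hE₀idem (projOp_mem x)
      
end Main


/-- Existence and uniqueness of the support projection of a channel,
together with its basic properties (i)-(iii). -/
theorem stmt_7 {H K : Type*}
    [NormedAddCommGroup H] [InnerProductSpace ℂ H] [FiniteDimensional ℂ H]
    [NormedAddCommGroup K] [InnerProductSpace ℂ K] [FiniteDimensional ℂ K]
    (Λ : (H →ₗ[ℂ] H) →ₗ[ℂ] (K →ₗ[ℂ] K)) (hΛ : IsChannel Λ)
    (Λd : (K →ₗ[ℂ] K) →ₗ[ℂ] (H →ₗ[ℂ] H)) (hΛd : IsHeisenbergDual Λ Λd) :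
    (∃! R : K →ₗ[ℂ] K, IsOrthoProj R ∧ Λd R = (1 : H →ₗ[ℂ] H) ∧
      ∀ Q : K →ₗ[ℂ] K, IsOrthoProj Q → LoewnerLE Q R → Λd Q = (1 : H →ₗ[ℂ] H) → Q = R) ∧
    ∀ R : K →ₗ[ℂ] K,
      (IsOrthoProj R ∧ Λd R = (1 : H →ₗ[ℂ] H) ∧
        ∀ Q : K →ₗ[ℂ] K, IsOrthoProj Q → LoewnerLE Q R → Λd Q = (1 : H →ₗ[ℂ] H) → Q = R) →
      ((∀ B : K →ₗ[ℂ] K,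
          Λd B = Λd (R ∘ₗ B) ∧ Λd B = Λd (B ∘ₗ R) ∧ Λd B = Λd (R ∘ₗ B ∘ₗ R)) ∧
       (∀ E₀ : K →ₗ[ℂ] K, IsPosOp E₀ → Λd E₀ = 0 → R ∘ₗ E₀ ∘ₗ R = 0) ∧
       (∀ E₀ : K →ₗ[ℂ] K, IsPosOp E₀ → IsPosOp ((1 : K →ₗ[ℂ] K) - E₀) →
          IsOrthoProj (Λd E₀) →
          IsOrthoProj (R ∘ₗ E₀ ∘ₗ R) ∧ R ∘ₗ E₀ = E₀ ∘ₗ R)) :=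
  stmt_7' Λ hΛ Λd hΛd
end

section
/- Let Ã : Ω → L(H) be a non-vanishing observable (Ã(k) ≠ 0 for all k) on a finite-dimensional complex Hilbert space H. Then ∑_{k∈Ω} rank Ã(k) ≥ dim H, with equality if and only if every Ã(k) is an orthogonal projection (i.e., Ã is sharp). -/
open scoped ComplexOrder

section Aux
variable {E : Type*} [NormedAddCommGroup E] [InnerProductSpace ℂ E] [FiniteDimensional ℂ E]

lemma aux_main (T : E →ₗ[ℂ] E) (hsa : LinearMap.adjoint T = T)
    (hpos : ∀ x : E, 0 ≤ (inner ℂ (T x) x : ℂ))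
    (hle : ∀ x : E, (inner ℂ (T x) x : ℂ) ≤ (inner ℂ x x : ℂ)) :
    ((LinearMap.trace ℂ E T).re ≤ (Module.finrank ℂ (LinearMap.range T) : ℝ)) ∧
    ((LinearMap.trace ℂ E T).re = (Module.finrank ℂ (LinearMap.range T) : ℝ) ↔
      T ∘ₗ T = T) := by
  have hsym : T.IsSymmetric :=
    (LinearMap.isSymmetric_iff_isSelfAdjoint T).2 (LinearMap.isSelfAdjoint_iff'.2 hsa)
  set n := Module.finrank ℂ E with hn
  have hfr : Module.finrank ℂ E = n := rfl
  set b := hsym.eigenvectorBasis hfr with hb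
  set μ := hsym.eigenvalues hfr with hμ
  have happ : ∀ i, T (b i) = (μ i : ℂ) • b i := fun i => hsym.apply_eigenvectorBasis hfr i
  -- eigenvalues in [0,1]
  have hnorm : ∀ i, (inner ℂ (b i) (b i) : ℂ) = 1 := by
    intro i
    rw [inner_self_eq_norm_sq_to_K]
    simp [b.orthonormal.1 i]
  have hμ0 : ∀ i, 0 ≤ μ i := by
    intro i
    have := hpos (b i)
    rw [happ i, inner_smul_left] at this
    simp [hnorm i] at this
    exact_mod_cast this
  have hμ1 : ∀ i, μ i ≤ 1 := by
    intro i
    have := hle (b i)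
    rw [happ i, inner_smul_left, hnorm i] at this
    simp at this
    exact_mod_cast this
  -- trace
  have htr : LinearMap.trace ℂ E T = ∑ i, (μ i : ℂ) := by
    rw [LinearMap.trace_eq_matrix_trace ℂ b.toBasis T, Matrix.trace]
    congr 1
    ext i
    rw [Matrix.diag_apply, LinearMap.toMatrix_apply]
    simp only [OrthonormalBasis.coe_toBasis, happ i, map_smul]
    simp [Finsupp.single_apply]
  have htrre : (LinearMap.trace ℂ E T).re = ∑ i, μ i := by
    rw [htr]; push_cast; simp
  -- rank
  have hrange : LinearMap.range T =
      Submodule.span ℂ (Set.range fun i : {i // μ i ≠ 0} => b i.1) := by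
    apply le_antisymm
    · rw [LinearMap.range_eq_map, ← b.toBasis.span_eq, Submodule.map_span]
      rw [Submodule.span_le]
      rintro x ⟨y, ⟨i, rfl⟩, rfl⟩
      simp only [OrthonormalBasis.coe_toBasis]
      rw [happ i]
      by_cases hi : μ i = 0
      · simp [hi]
      · exact Submodule.smul_mem _ _ (Submodule.subset_span ⟨⟨i, hi⟩, rfl⟩)
    · rw [Submodule.span_le]
      rintro x ⟨⟨i, hi⟩, rfl⟩
      refine ⟨((μ i)⁻¹ : ℂ) • b i, ?_⟩
      rw [map_smul, happ i, smul_smul]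
      rw [inv_mul_cancel₀ (by exact_mod_cast hi), one_smul]
  have hrank : Module.finrank ℂ (LinearMap.range T)
      = Fintype.card {i // μ i ≠ 0} := by
    rw [hrange, finrank_span_eq_card]
    exact b.orthonormal.linearIndependent.comp _ Subtype.val_injective
  -- idempotency characterization
  have hidem : T ∘ₗ T = T ↔ ∀ i, μ i = 0 ∨ μ i = 1 := by
    constructor
    · intro h i
      have := congrArg (fun S => S (b i)) h
      simp only [LinearMap.comp_apply, happ i, map_smul, smul_smul] at this
      have hne : b i ≠ 0 := b.orthonormal.ne_zero i
      have h2 : ((μ i : ℂ) * μ i - μ i) • b i = 0 := by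
        rw [sub_smul, this, sub_self]
      rcases smul_eq_zero.1 h2 with h3 | h3
      · have h4 : (μ i : ℂ) * μ i = μ i := by rwa [sub_eq_zero] at h3
        have h5 : μ i * μ i = μ i := by exact_mod_cast h4
        rcases mul_eq_zero.1 (by linarith : μ i * (μ i - 1) = 0) with h6 | h6
        · exact Or.inl h6
        · exact Or.inr (by linarith)
      · exact absurd h3 hne
    · intro h
      apply b.toBasis.ext
      intro i
      simp only [LinearMap.comp_apply, OrthonormalBasis.coe_toBasis, happ i,
        map_smul, smul_smul]
      rcases h i with h0 | h1
      · simp [h0]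
      · simp [h1]
  classical
  set s : Finset (Fin n) := Finset.univ.filter (fun i => μ i ≠ 0) with hsdef
  have hsum : ∑ i, μ i = ∑ i ∈ s, μ i := (Finset.sum_filter_ne_zero _).symm
  have hcard : (Fintype.card {i // μ i ≠ 0} : ℝ) = ∑ _i ∈ s, (1:ℝ) := by
    rw [Finset.sum_const, nsmul_eq_mul, mul_one, Fintype.card_subtype]
  have hle' : ∀ i ∈ s, μ i ≤ 1 := fun i _ => hμ1 i
  constructor
  · rw [htrre, hrank, hsum]
    rw [show ((Fintype.card {i // μ i ≠ 0} : ℕ) : ℝ) = ∑ _i ∈ s, (1:ℝ) from hcard]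
    exact Finset.sum_le_sum hle'
  · rw [htrre, hrank, hidem, hsum]
    rw [show ((Fintype.card {i // μ i ≠ 0} : ℕ) : ℝ) = ∑ _i ∈ s, (1:ℝ) from hcard]
    constructor
    · intro heq i
      by_cases h0 : μ i = 0
      · exact Or.inl h0
      · refine Or.inr ?_
        exact (Finset.sum_eq_sum_iff_of_le hle').1 heq i
          (Finset.mem_filter.2 ⟨Finset.mem_univ i, h0⟩)
    · intro h
      apply Finset.sum_congr rfl
      intro i hi
      rcases h i with h0 | h1
      · exact absurd h0 (Finset.mem_filter.1 hi).2
      · exact h1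

end Aux

/-- For a non-vanishing observable `Ã` on `H`,
`∑ₖ rank Ã(k) ≥ dim H`, with equality iff every `Ã(k)` is an orthogonal projection. -/
theorem stmt_12 {H : Type*}
    [NormedAddCommGroup H] [InnerProductSpace ℂ H] [FiniteDimensional ℂ H]
    {Ω : Type*} [Fintype Ω]
    (A : Ω → H →ₗ[ℂ] H) (hA : IsPOVM A) (hnv : ∀ k, A k ≠ 0) :
    Module.finrank ℂ H ≤ ∑ k, Module.finrank ℂ ↥(LinearMap.range (A k)) ∧
    ((∑ k, Module.finrank ℂ ↥(LinearMap.range (A k)) = Module.finrank ℂ H) ↔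
      ∀ k, IsOrthoProj (A k)) := by
  classical
  obtain ⟨hpos, hsum⟩ := hA
  have hle1 : ∀ k (x : H), (inner ℂ (A k x) x : ℂ) ≤ (inner ℂ x x : ℂ) := by
    intro k x
    have hsx : ∑ j, (inner ℂ (A j x) x : ℂ) = (inner ℂ x x : ℂ) := by
      rw [← sum_inner]
      congr 1
      rw [← LinearMap.sum_apply, hsum, Module.End.one_apply]
    rw [← hsx]
    exact Finset.single_le_sum (fun j _ => (hpos j).2 x) (Finset.mem_univ k)
  have haux := fun k => aux_main (A k) (hpos k).1 (hpos k).2 (hle1 k)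
  have htr : ∑ k, LinearMap.trace ℂ H (A k) = (Module.finrank ℂ H : ℂ) := by
    rw [← map_sum, hsum, LinearMap.trace_one]
  have htrre : ∑ k, (LinearMap.trace ℂ H (A k)).re = (Module.finrank ℂ H : ℝ) := by
    have := congrArg Complex.re htr
    simpa [Complex.re_sum] using this
  have hineqR : (Module.finrank ℂ H : ℝ) ≤
      ∑ k, (Module.finrank ℂ ↥(LinearMap.range (A k)) : ℝ) := by
    rw [← htrre]
    exact Finset.sum_le_sum fun k _ => (haux k).1
  constructor
  · exact_mod_cast hineqR
  · constructor
    · intro heq k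
      have heqR : ∑ k, ((Module.finrank ℂ ↥(LinearMap.range (A k)) : ℝ)
          - (LinearMap.trace ℂ H (A k)).re) = 0 := by
        rw [Finset.sum_sub_distrib, htrre]
        rw [show ∑ k, (Module.finrank ℂ ↥(LinearMap.range (A k)) : ℝ)
            = ((∑ k, Module.finrank ℂ ↥(LinearMap.range (A k)) : ℕ) : ℝ) by push_cast; ring]
        rw [heq, sub_self]
      have hz := (Finset.sum_eq_zero_iff_of_nonneg
        (fun k _ => sub_nonneg.2 (haux k).1)).1 heqR k (Finset.mem_univ k)
      have : (LinearMap.trace ℂ H (A k)).re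
          = (Module.finrank ℂ ↥(LinearMap.range (A k)) : ℝ) := by linarith [sub_eq_zero.1 hz]
      exact ⟨(hpos k).1, (haux k).2.1 this⟩
    · intro h
      have : ∀ k, (LinearMap.trace ℂ H (A k)).re
          = (Module.finrank ℂ ↥(LinearMap.range (A k)) : ℝ) :=
        fun k => (haux k).2.2 (h k).2
      have hR : (∑ k, (Module.finrank ℂ ↥(LinearMap.range (A k)) : ℝ))
          = (Module.finrank ℂ H : ℝ) := by
        rw [← htrre]
        exact Finset.sum_congr rfl (fun k _ => (this k).symm)
      exact_mod_cast hR
end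

section
/- Let A : Ω → L(H) be a non-vanishing extreme observable on a finite-dimensional complex Hilbert space H with finite outcome set Ω. Then A is minimally sufficient, i.e., every observable post-processing equivalent to A is a refinement of A. -/
open scoped ComplexOrder

section Helpers

open scoped ComplexOrder

variable {E : Type*} [NormedAddCommGroup E] [InnerProductSpace ℂ E] [FiniteDimensional ℂ E]

lemma IsPosOp.add' {S T : E →ₗ[ℂ] E} (hS : IsPosOp S) (hT : IsPosOp T) : IsPosOp (S + T) := by
  refine ⟨by rw [map_add, hS.1, hT.1], fun x => ?_⟩
  simpa [inner_add_left] using add_nonneg (hS.2 x) (hT.2 x)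

lemma IsPosOp.real_smul {T : E →ₗ[ℂ] E} (hT : IsPosOp T) {c : ℝ} (hc : 0 ≤ c) :
    IsPosOp ((c : ℂ) • T) := by
  constructor
  · rw [map_smulₛₗ, hT.1]
    simp
  · intro x
    have h1 : ((c : ℂ) • T) x = (c : ℂ) • T x := rfl
    rw [h1, inner_smul_left, Complex.conj_ofReal]
    exact mul_nonneg (by exact_mod_cast hc) (hT.2 x)

lemma isPosOp_sum {ι : Type*} (s : Finset ι) (T : ι → E →ₗ[ℂ] E)
    (h : ∀ i ∈ s, IsPosOp (T i)) : IsPosOp (∑ i ∈ s, T i) := by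
  constructor
  · rw [map_sum]
    exact Finset.sum_congr rfl fun i hi => (h i hi).1
  · intro x
    rw [LinearMap.sum_apply, sum_inner]
    exact Finset.sum_nonneg fun i hi => (h i hi).2 x

end Helpers

/-- A non-vanishing extreme observable is minimally sufficient. -/
theorem stmt_14 {H : Type*}
    [NormedAddCommGroup H] [InnerProductSpace ℂ H] [FiniteDimensional ℂ H]
    {Ω : Type*} [Fintype Ω] [DecidableEq Ω]
    (A : Ω → H →ₗ[ℂ] H) (hA : IsExtremeObs A) (hnv : ∀ j, A j ≠ 0) :
    MinSufficient A := by
  classical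
  obtain ⟨⟨hApos, hAsum⟩, hExt⟩ := hA
  intro Ω' _ B hB hEquiv
  obtain ⟨⟨p, hp0, hp1, hpB⟩, ⟨q, hq0, hq1, hqA⟩⟩ := hEquiv
  rcases isEmpty_or_nonempty Ω' with hΩ' | hΩ'
  · rcases isEmpty_or_nonempty Ω with hΩ | hΩ
    · exact ⟨fun k => isEmptyElim k, fun j => isEmptyElim j⟩
    · obtain ⟨j⟩ := hΩ
      exact absurd (by simpa using hqA j) (hnv j)
  have hΩ : Nonempty Ω := by
    rcases isEmpty_or_nonempty Ω with h | h
    · obtain ⟨k⟩ := hΩ'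
      have := hq1 k
      simp at this
    · exact h
  -- the composed stochastic matrix fixes A
  have key : ∀ j, A j = ∑ j', ((∑ k, q j k * p k j' : ℝ) : ℂ) • A j' := by
    intro j
    calc A j = ∑ k, (q j k : ℂ) • B k := hqA j
    _ = ∑ k, ∑ j', ((q j k * p k j' : ℝ) : ℂ) • A j' := by
        refine Finset.sum_congr rfl fun k _ => ?_
        rw [hpB k, Finset.smul_sum]
        refine Finset.sum_congr rfl fun j' _ => ?_
        rw [smul_smul]
        push_cast
        ring_nf
    _ = ∑ j', ((∑ k, q j k * p k j' : ℝ) : ℂ) • A j' := by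
        rw [Finset.sum_comm]
        refine Finset.sum_congr rfl fun j' _ => ?_
        rw [Complex.ofReal_sum, Finset.sum_smul]
  -- off-diagonal entries vanish by extremality
  have hS0 : ∀ j j', j ≠ j' → (∑ k, q j k * p k j') = 0 := by
    intro j j' hne
    by_contra hc0
    set c : ℝ := ∑ k, q j k * p k j' with hc
    have hcpos : 0 < c :=
      lt_of_le_of_ne (Finset.sum_nonneg fun k _ => mul_nonneg (hq0 j k) (hp0 k j')) (Ne.symm hc0)
    set ε : ℝ := min c 1 with hεdef
    have hεpos : 0 < ε := lt_min hcpos one_pos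
    have hεc : ε ≤ c := min_le_left _ _
    have hε1 : ε ≤ 1 := min_le_right _ _
    have hpsd : IsPosOp (A j - (c : ℂ) • A j') := by
      have hdecomp : A j - (c : ℂ) • A j'
          = ∑ j'' ∈ Finset.univ.erase j', ((∑ k, q j k * p k j'' : ℝ) : ℂ) • A j'' := by
        have h1 := key j
        rw [← Finset.add_sum_erase _ _ (Finset.mem_univ j')] at h1
        rw [sub_eq_iff_eq_add']
        rw [h1, ← hc]
      rw [hdecomp]
      exact isPosOp_sum _ _ fun j'' _ =>
        (hApos j'').real_smul (Finset.sum_nonneg fun k _ => mul_nonneg (hq0 j k) (hp0 k j''))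
    set d : Ω → ℝ := fun i => (if i = j' then ε else 0) - (if i = j then ε else 0) with hd
    have hdsum : ∑ i, d i = 0 := by
      simp [hd, Finset.sum_sub_distrib]
    have hdj : d j = -ε := by simp [hd, hne]
    have hdj' : d j' = ε := by simp [hd, Ne.symm hne]
    set B₁ : Ω → H →ₗ[ℂ] H := fun i => A i + (d i : ℂ) • A j' with hB₁
    set B₂ : Ω → H →ₗ[ℂ] H := fun i => A i - (d i : ℂ) • A j' with hB₂
    have hsum₁ : ∑ i, B₁ i = 1 := by
      simp only [hB₁, Finset.sum_add_distrib, ← Finset.sum_smul, ← Complex.ofReal_sum,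
        hdsum, hAsum]
      simp
    have hsum₂ : ∑ i, B₂ i = 1 := by
      simp only [hB₂, Finset.sum_sub_distrib, ← Finset.sum_smul, ← Complex.ofReal_sum,
        hdsum, hAsum]
      simp
    have hpos₁ : ∀ i, IsPosOp (B₁ i) := by
      intro i
      rcases eq_or_ne i j with rfl | hij
      · have heq : B₁ i = (A i - (c : ℂ) • A j') + ((c - ε : ℝ) : ℂ) • A j' := by
          simp only [hB₁, hdj]
          push_cast
          module
        rw [heq]
        exact hpsd.add' ((hApos j').real_smul (by linarith))
      · rcases eq_or_ne i j' with rfl | hij'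
        · have heq : B₁ i = A i + ((ε : ℝ) : ℂ) • A i := by
            simp only [hB₁, hdj']
          rw [heq]
          exact (hApos i).add' ((hApos i).real_smul hεpos.le)
        · have heq : B₁ i = A i := by
            simp [hB₁, hd, hij, hij']
          rw [heq]; exact hApos i
    have hpos₂ : ∀ i, IsPosOp (B₂ i) := by
      intro i
      rcases eq_or_ne i j with rfl | hij
      · have heq : B₂ i = A i + ((ε : ℝ) : ℂ) • A j' := by
          simp only [hB₂, hdj]
          push_cast
          module
        rw [heq]
        exact (hApos i).add' ((hApos j').real_smul hεpos.le)
      · rcases eq_or_ne i j' with rfl | hij'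
        · have heq : B₂ i = ((1 - ε : ℝ) : ℂ) • A i := by
            simp only [hB₂, hdj']
            push_cast
            module
          rw [heq]
          exact (hApos i).real_smul (by linarith)
        · have heq : B₂ i = A i := by
            simp [hB₂, hd, hij, hij']
          rw [heq]; exact hApos i
    obtain ⟨hB₁A, -⟩ := hExt B₁ B₂ (1/2) ⟨hpos₁, hsum₁⟩ ⟨hpos₂, hsum₂⟩ (by norm_num)
      (by norm_num) (fun i => by
        simp only [hB₁, hB₂]
        push_cast
        module)
    have hcontr := congrFun hB₁A j'
    simp only [hB₁, hdj'] at hcontr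
    have : ((ε : ℝ) : ℂ) • A j' = 0 := add_eq_left.mp hcontr
    rcases smul_eq_zero.mp this with h | h
    · exact absurd (by exact_mod_cast h) hεpos.ne'
    · exact hnv j' h
  have hqp : ∀ j j' k, j ≠ j' → q j k * p k j' = 0 := by
    intro j j' k hne
    exact (Finset.sum_eq_zero_iff_of_nonneg
      (fun k _ => mul_nonneg (hq0 j k) (hp0 k j'))).mp (hS0 j j' hne) k (Finset.mem_univ k)
  have huniq : ∀ k {j j' : Ω}, p k j ≠ 0 → p k j' ≠ 0 → j = j' := by
    intro k j j' hj hj'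
    by_contra hne
    have hq_all : ∀ i, q i k = 0 := by
      intro i
      rcases eq_or_ne i j with rfl | hij
      · exact (mul_eq_zero.mp (hqp i j' k hne)).resolve_right hj'
      · exact (mul_eq_zero.mp (hqp i j k hij)).resolve_right hj
    have h1 := hq1 k
    rw [Finset.sum_eq_zero (fun i _ => hq_all i)] at h1
    norm_num at h1
  set f : Ω' → Ω := fun k => if h : ∃ j, p k j ≠ 0 then h.choose else hΩ.some with hf
  have hf1 : ∀ k j, p k j ≠ 0 → f k = j := by
    intro k j hj
    have hex : ∃ j, p k j ≠ 0 := ⟨j, hj⟩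
    simp only [hf]
    rw [dif_pos hex]
    exact huniq k hex.choose_spec hj
  refine ⟨f, fun j => ?_⟩
  have hBk : ∀ k, f k = j → B k = (p k j : ℂ) • A j := by
    intro k hk
    rw [hpB k, Finset.sum_eq_single j]
    · intro j' _ hj'
      by_cases hp : p k j' = 0
      · simp [hp]
      · exact absurd ((hf1 k j' hp).symm.trans hk) hj'
    · intro h
      exact absurd (Finset.mem_univ j) h
  calc A j = ((∑ k ∈ Finset.univ.filter (fun k => f k = j), p k j : ℝ) : ℂ) • A j := by
        rw [Finset.sum_filter_of_ne (fun k _ hk => hf1 k j hk), hp1 j]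
        simp
  _ = ∑ k ∈ Finset.univ.filter (fun k => f k = j), (p k j : ℂ) • A j := by
        rw [Complex.ofReal_sum, Finset.sum_smul]
  _ = ∑ k ∈ Finset.univ.filter (fun k => f k = j), B k :=
        Finset.sum_congr rfl fun k hk => (hBk k (Finset.mem_filter.mp hk).2).symm
end
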